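/- Let X ∼ F_X and suppose F_X jumps at x_0, i.e., P(X = x_0) = F_X(x_0) − F_X(x_0−) > 0, and let T be pcsm on the support of F_X. Let 𝒲_g be the generalised W-transform of F_X and T. Then 𝒲_g is affine on the interval (F_X(x_0−), F_X(x_0)), given there by 𝒲_g(u) = [(F_{T(X)}(T(x_0)) − F_{T(X)}(T(x_0)−))/(F_X(x_0) − F_X(x_0−))] (u − F_X(x_0−)) + F_{T(X)}(T(x_0)−). Moreover, if x_0, …, x_L are exactly the jump points of F_X mapped by T to the same value s = T(x_0), then F_{T(X)}(s) − F_{T(X)}(s−) = Σ_{ℓ=0}^L P(X = x_ℓ), so the slope of the linear piece of 𝒲_g on (F_X(x_ℓ−), F_X(x_ℓ)) equals (Σ_{ℓ′=0}^L P(X = x_{ℓ′}))/P(X = x_ℓ) for each ℓ ∈ {0,…,L}. -/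

import Mathlib

open MeasureTheory Set

/-- The distribution function of a measure on `ℝ`. -/
noncomputable def distFun (μ : Measure ℝ) : ℝ → ℝ := fun x => (μ (Set.Iic x)).toReal

/-- The left limit `F(x-) = P(X < x)` of the distribution function of `μ`. -/
noncomputable def distFunLeft (μ : Measure ℝ) : ℝ → ℝ := fun x => (μ (Set.Iio x)).toReal

/-- The modified distribution function `F(x, v) = P(X < x) + v P(X = x)`. -/
noncomputable def modDistFun (μ : Measure ℝ) : ℝ → ℝ → ℝ :=
  fun x v => (μ (Set.Iio x)).toReal + v * (μ {x}).toReal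

/-- The support of a distribution function `F`. -/
def suppSet (F : ℝ → ℝ) : Set ℝ := {x : ℝ | ∀ h > 0, 0 < F x - F (x - h)}

/-- The `k`-th open piece `(t_{k-1}, t_k)`. -/
def pieceO (t : ℕ → EReal) (k : ℕ) : Set ℝ :=
  {x : ℝ | t (k - 1) < (x : EReal) ∧ (x : EReal) < t k}

lemma WT.distFun_eq (μ : Measure ℝ) [IsFiniteMeasure μ] (x : ℝ) :
    distFun μ x = distFunLeft μ x + (μ {x}).toReal := by
  have : Set.Iic x = Set.Iio x ∪ {x} := by
    ext y; simp [le_iff_lt_or_eq]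
  rw [distFun, distFunLeft, this, measure_union (by simp) (measurableSet_singleton x),
    ENNReal.toReal_add (measure_ne_top μ _) (measure_ne_top μ _)]

lemma WT.mem_suppSet_iff (μ : Measure ℝ) [IsFiniteMeasure μ] (x : ℝ) :
    x ∈ suppSet (distFun μ) ↔ ∀ h > 0, μ (Set.Ioc (x - h) x) ≠ 0 := by
  have key : ∀ h : ℝ, 0 < h →
      distFun μ x - distFun μ (x - h) = (μ (Set.Ioc (x - h) x)).toReal := by
    intro h hh
    have hle : x - h ≤ x := by linarith
    have : μ (Set.Iic x) = μ (Set.Iic (x - h)) + μ (Set.Ioc (x - h) x) := by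
      rw [← Set.Iic_union_Ioc_eq_Iic hle, measure_union (by
        simp [Set.disjoint_left]; intro a ha ha'; linarith) measurableSet_Ioc]
    simp only [distFun, this, ENNReal.toReal_add (measure_ne_top μ _) (measure_ne_top μ _)]
    ring
  constructor
  · intro hx h hh
    have := hx h hh
    rw [key h hh] at this
    intro h0
    rw [h0] at this; simp at this
  · intro hx h hh
    rw [key h hh]
    have := hx h hh
    exact ENNReal.toReal_pos this (measure_ne_top μ _)

/-- The complement of the support is contained in a measurable null set. -/
lemma WT.suppSet_compl_subset_null (μ : Measure ℝ) [IsFiniteMeasure μ] :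
    ∃ N : Set ℝ, MeasurableSet N ∧ μ N = 0 ∧ (suppSet (distFun μ))ᶜ ⊆ N := by
  classical
  set S : Set ℝ := (suppSet (distFun μ))ᶜ with hS
  have hSh : ∀ x ∈ S, ∃ h > 0, μ (Set.Ioc (x - h) x) = 0 := by
    intro x hx
    have := (WT.mem_suppSet_iff μ x).not.mp hx
    push_neg at this
    exact this
  choose! h hpos hnull using hSh
  set V : Set ℝ := ⋃ x ∈ S, Set.Ioo (x - h x) x with hV
  have hVopen : IsOpen V := isOpen_biUnion fun x _ => isOpen_Ioo
  have hVnull : μ V = 0 := by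
    obtain ⟨Tc, hTc, hTeq⟩ := TopologicalSpace.isOpen_iUnion_countable
      (fun x : S => Set.Ioo ((x : ℝ) - h x) (x : ℝ)) (fun _ => isOpen_Ioo)
    have : V = ⋃ x ∈ Tc, Set.Ioo ((x : ℝ) - h x) (x : ℝ) := by
      rw [hV, hTeq]
      exact Set.biUnion_eq_iUnion S _
    rw [this, measure_biUnion_null_iff hTc]
    intro x _
    exact measure_mono_null Set.Ioo_subset_Ioc_self (hnull x x.2)
  set E : Set ℝ := S \ V with hE
  have hEc : E.Countable := by
    have hmapsto : ∀ x ∈ E, ∃ q : ℚ, (q : ℝ) ∈ Set.Ioo (x - h x) x := by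
      intro x hx
      obtain ⟨q, hq1, hq2⟩ := exists_rat_btwn (show x - h x < x by
        have := hpos x hx.1; linarith)
      exact ⟨q, hq1, hq2⟩
    choose! q hq using hmapsto
    apply (Set.mapsTo_univ q E).countable_of_injOn _ Set.countable_univ
    intro a ha b hb hab
    have hab' : ((q a : ℝ)) = ((q b : ℝ)) := by exact_mod_cast hab
    by_contra hne
    rcases lt_or_gt_of_ne hne with hlt | hlt
    · have h1 := hq a ha; have h2 := hq b hb
      rw [hab'] at h1
      have : a ∈ Set.Ioo (b - h b) b := ⟨lt_trans h2.1 h1.2, hlt⟩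
      exact ha.2 (Set.mem_biUnion hb.1 this)
    · have h1 := hq a ha; have h2 := hq b hb
      rw [← hab'] at h2
      have : b ∈ Set.Ioo (a - h a) a := ⟨lt_trans h1.1 h2.2, hlt⟩
      exact hb.2 (Set.mem_biUnion ha.1 this)
  have hEnull : μ E = 0 := by
    have : E = (fun y : ℝ => y) ⁻¹' E := rfl
    rw [this, measure_preimage_eq_zero_iff_of_countable hEc]
    intro x hx
    have : ({x} : Set ℝ) ⊆ Set.Ioc (x - h x) x := by
      simp [Set.singleton_subset_iff, hpos x hx.1]
    simpa using measure_mono_null this (hnull x hx.1)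
  refine ⟨V ∪ E, hVopen.measurableSet.union hEc.measurableSet, ?_, ?_⟩
  · exact measure_union_null hVnull hEnull
  · intro x hx
    by_cases hxV : x ∈ V
    · exact Or.inl hxV
    · exact Or.inr ⟨hx, hxV⟩


lemma WT.pieceO_isOpen (t : ℕ → EReal) (k : ℕ) : IsOpen (pieceO t k) := by
  have : pieceO t k = (fun x : ℝ => (x : EReal)) ⁻¹' (Set.Ioo (t (k-1)) (t k)) := rfl
  rw [this]
  exact isOpen_Ioo.preimage continuous_coe_real_ereal

lemma WT.exists_piece {K : ℕ} (t : ℕ → EReal)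
    {y : ℝ} (h0 : t 0 < (y : EReal)) (hKy : (y : EReal) < t K)
    (hne : ∀ k, k < K → (y : EReal) ≠ t k) :
    ∃ k, 1 ≤ k ∧ k ≤ K ∧ y ∈ pieceO t k := by
  classical
  have hex : ∃ k, (y : EReal) < t k := ⟨K, hKy⟩
  set k := Nat.find hex with hk
  have hky : (y : EReal) < t k := Nat.find_spec hex
  have hkK : k ≤ K := Nat.find_min' hex hKy
  have hk1 : 1 ≤ k := by
    rcases Nat.eq_zero_or_pos k with h | h
    · rw [h] at hky; exact absurd hky (not_lt.mpr h0.le)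
    · exact h
  refine ⟨k, hk1, hkK, ?_, hky⟩
  have hle : ¬ ((y : EReal) < t (k - 1)) := Nat.find_min hex (by omega)
  exact lt_of_le_of_ne (not_lt.mp hle) (fun h => hne (k-1) (by omega) h.symm)

lemma WT.measurable_aux {K : ℕ} (t : ℕ → EReal) (T : ℝ → ℝ)
    (hTcont : ∀ k : ℕ, 1 ≤ k → k ≤ K → ContinuousOn T (pieceO t k)) :
    ∃ (D : Set ℝ) (g : ℝ → ℝ), MeasurableSet D ∧ Measurable g ∧
      (∀ y ∈ D, g y = T y) ∧
      {y : ℝ | ∃ k, k ≤ K ∧ (y : EReal) = t k} ⊆ D ∧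
      (∀ k, 1 ≤ k → k ≤ K → pieceO t k ⊆ D) := by
  classical
  set U : Set ℝ := ⋃ k ∈ Set.Icc 1 K, pieceO t k with hUdef
  have hUopen : IsOpen U := isOpen_biUnion fun k _ => WT.pieceO_isOpen t k
  set C : Set ℝ := {y : ℝ | ∃ k, k ≤ K ∧ (y : EReal) = t k} with hCdef
  have hCc : C.Countable := by
    have : C ⊆ ⋃ k ∈ Set.Iic K, {y : ℝ | (y : EReal) = t k} := by
      rintro y ⟨k, hk, hy⟩
      exact Set.mem_biUnion hk hy
    refine Set.Countable.mono this (Set.Countable.biUnion (Set.to_countable _) ?_)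
    intro k _
    apply Set.Subsingleton.countable
    intro a ha b hb
    exact EReal.coe_injective (ha.trans hb.symm)
  have hU_cont : ∀ x ∈ U, ContinuousAt T x := by
    intro x hx
    simp only [hUdef, Set.mem_iUnion, exists_prop] at hx
    obtain ⟨k, hk, hxk⟩ := hx
    exact (hTcont k hk.1 hk.2).continuousAt ((WT.pieceO_isOpen t k).mem_nhds hxk)
  set g0 : ℝ → ℝ := U.piecewise T (fun _ => 0) with hg0def
  have hg0 : Measurable g0 := by
    refine measurable_of_isOpen fun B hB => ?_
    rw [hg0def, Set.piecewise_preimage, Set.ite]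
    have hopen : IsOpen (T ⁻¹' B ∩ U) := by
      rw [isOpen_iff_mem_nhds]
      rintro x ⟨hxB, hxU⟩
      exact Filter.inter_mem ((hU_cont x hxU).preimage_mem_nhds (hB.mem_nhds hxB))
        (hUopen.mem_nhds hxU)
    exact hopen.measurableSet.union ((measurable_const (a := (0:ℝ))) hB.measurableSet
      |>.diff hUopen.measurableSet)
  set g : ℝ → ℝ := C.piecewise T g0 with hgdef
  have hg : Measurable g := by
    intro B hB
    rw [hgdef, Set.piecewise_preimage, Set.ite]
    exact ((hCc.mono Set.inter_subset_right).measurableSet).union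
      ((hg0 hB).diff hCc.measurableSet)
  refine ⟨C ∪ U, g, hCc.measurableSet.union hUopen.measurableSet, hg, ?_, ?_, ?_⟩
  · rintro y (hyC | hyU)
    · rw [hgdef, Set.piecewise_eq_of_mem _ _ _ hyC]
    · by_cases hyC : y ∈ C
      · rw [hgdef, Set.piecewise_eq_of_mem _ _ _ hyC]
      · rw [hgdef, Set.piecewise_eq_of_notMem _ _ _ hyC, hg0def,
          Set.piecewise_eq_of_mem _ _ _ hyU]
  · exact fun y hy => Or.inl hy
  · intro k hk1 hkK y hy
    exact Or.inr (Set.mem_biUnion (Set.mem_Icc.mpr ⟨hk1, hkK⟩) hy)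

lemma WT.changePoints_countable (t : ℕ → EReal) (K : ℕ) :
    {y : ℝ | ∃ k, k ≤ K ∧ (y : EReal) = t k}.Countable := by
  have : {y : ℝ | ∃ k, k ≤ K ∧ (y : EReal) = t k} ⊆
      ⋃ k ∈ Set.Iic K, {y : ℝ | (y : EReal) = t k} := by
    rintro y ⟨k, hk, hy⟩
    exact Set.mem_biUnion hk hy
  refine Set.Countable.mono this (Set.Countable.biUnion (Set.to_countable _) ?_)
  intro k _
  exact Set.Subsingleton.countable fun a ha b hb => EReal.coe_injective (ha.trans hb.symm)

lemma WT.affine {Ω : Type*} [MeasurableSpace Ω] (P : Measure Ω) [IsProbabilityMeasure P]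
    (X : Ω → ℝ) (hX : Measurable X) (T : ℝ → ℝ)
    (hae : AEMeasurable (fun ω => T (X ω)) P)
    (Wg : ℝ → ℝ)
    (hWg : ∀ x : ℝ, ∀ v ∈ Set.Icc (0:ℝ) 1, 0 < modDistFun (P.map X) x v →
      Wg (modDistFun (P.map X) x v) = modDistFun (P.map (fun ω => T (X ω))) (T x) v)
    (y : ℝ) (hy : 0 < ((P.map X) {y}).toReal) :
    ∀ u ∈ Set.Ioo (distFunLeft (P.map X) y) (distFun (P.map X) y),
      Wg u = ((distFun (P.map (fun ω => T (X ω))) (T y)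
                - distFunLeft (P.map (fun ω => T (X ω))) (T y))
            / (distFun (P.map X) y - distFunLeft (P.map X) y))
          * (u - distFunLeft (P.map X) y)
        + distFunLeft (P.map (fun ω => T (X ω))) (T y) := by
  intro u hu
  have hμprob : IsProbabilityMeasure (P.map X) := Measure.isProbabilityMeasure_map hX.aemeasurable
  have hνprob : IsProbabilityMeasure (P.map (fun ω => T (X ω))) := Measure.isProbabilityMeasure_map hae
  set μ := P.map X
  set ν := P.map (fun ω => T (X ω))
  set p := (μ {y}).toReal with hpdef
  set a := distFunLeft μ y with hadef
  set q := (ν {T y}).toReal with hqdef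
  have hFa : distFun μ y = a + p := WT.distFun_eq μ y
  have hGq : distFun ν (T y) = distFunLeft ν (T y) + q := WT.distFun_eq ν (T y)
  have hp : 0 < p := hy
  have ha0 : 0 ≤ a := ENNReal.toReal_nonneg
  set v := (u - a) / p with hvdef
  have hv0 : 0 < v := div_pos (by linarith [hu.1]) hp
  have hv1 : v < 1 := by
    rw [hvdef, div_lt_one hp]
    have := hu.2; rw [hFa] at this; linarith
  have hua : u - a = v * p := by
    rw [hvdef, div_mul_cancel₀ _ (ne_of_gt hp)]
  have hmv : modDistFun μ y v = u := by
    simp only [modDistFun, ← hpdef]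
    have : (μ (Set.Iio y)).toReal = a := rfl
    rw [this, ← hua]; ring
  have hpos : 0 < modDistFun μ y v := by rw [hmv]; linarith [hu.1]
  have hW := hWg y v ⟨hv0.le, hv1.le⟩ hpos
  rw [hmv] at hW
  rw [hW, hGq, hFa]
  simp only [modDistFun, ← hqdef]
  have hL : (ν (Set.Iio (T y))).toReal = distFunLeft ν (T y) := rfl
  rw [hL]
  have : a + p - a = p := by ring
  rw [this, show distFunLeft ν (T y) + q - distFunLeft ν (T y) = q by ring, hua]
  field_simp
  ring

/-- if `F_X` jumps at `x_0` then the generalised W-transform `𝒲_g` is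
affine on `(F_X(x_0−), F_X(x_0))` with the stated intercept and, when `x_0, …, x_L`
are exactly the jump points mapped by `T` to `s = T(x_0)`, the jump of `F_{T(X)}` at
`s` is `Σ_ℓ P(X = x_ℓ)` and the slope on `(F_X(x_ℓ−), F_X(x_ℓ))` is
`(Σ_{ℓ'} P(X = x_{ℓ'}))/P(X = x_ℓ)`. -/
theorem generalised_w_transform_linear_on_jumps
    {Ω : Type*} [MeasurableSpace Ω] (P : Measure Ω) [IsProbabilityMeasure P]
    (X : Ω → ℝ) (hX : Measurable X)
    (T : ℝ → ℝ)
    -- `T` is pcsm on the support of `F_X`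
    (K : ℕ) (hK : 1 ≤ K) (t : ℕ → EReal)
    (ht : ∀ k : ℕ, k < K → t k < t (k + 1))
    (hTcont : ∀ k : ℕ, 1 ≤ k → k ≤ K → ContinuousOn T (pieceO t k))
    (hTmono : ∀ k : ℕ, 1 ≤ k → k ≤ K →
      StrictMonoOn T (pieceO t k) ∨ StrictAntiOn T (pieceO t k))
    (hsupp0 : sInf ((fun x : ℝ => (x : EReal)) '' suppSet (distFun (P.map X))) = t 0)
    (hsuppK : sSup ((fun x : ℝ => (x : EReal)) '' suppSet (distFun (P.map X))) = t K)
    -- the generalised W-transform `𝒲_g` of `F_X` and `T`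
    (Wg : ℝ → ℝ)
    (hWg : ∀ x : ℝ, ∀ v ∈ Set.Icc (0 : ℝ) 1, 0 < modDistFun (P.map X) x v →
      Wg (modDistFun (P.map X) x v)
        = modDistFun (P.map (fun ω => T (X ω))) (T x) v)
    -- `F_X` jumps at `x₀`
    (x₀ : ℝ) (hx₀ : 0 < ((P.map X) {x₀}).toReal) :
    -- `𝒲_g` is affine on `(F_X(x₀−), F_X(x₀))`, with the explicit formula
    (∀ u ∈ Set.Ioo (distFunLeft (P.map X) x₀) (distFun (P.map X) x₀),
      Wg u = ((distFun (P.map (fun ω => T (X ω))) (T x₀)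
                - distFunLeft (P.map (fun ω => T (X ω))) (T x₀))
              / (distFun (P.map X) x₀ - distFunLeft (P.map X) x₀))
            * (u - distFunLeft (P.map X) x₀)
          + distFunLeft (P.map (fun ω => T (X ω))) (T x₀)) ∧
    -- the multi-jump statement
    (∀ L : ℕ, ∀ x : Fin (L + 1) → ℝ, x 0 = x₀ → Function.Injective x →
      (∀ ℓ, 0 < ((P.map X) {x ℓ}).toReal) →
      (∀ ℓ, T (x ℓ) = T x₀) →
      (∀ y : ℝ, 0 < ((P.map X) {y}).toReal → T y = T x₀ → ∃ ℓ, y = x ℓ) →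
      (((P.map (fun ω => T (X ω))) {T x₀}).toReal
          = ∑ ℓ : Fin (L + 1), ((P.map X) {x ℓ}).toReal) ∧
      ∀ ℓ : Fin (L + 1),
        ∀ u₁ ∈ Set.Ioo (distFunLeft (P.map X) (x ℓ)) (distFun (P.map X) (x ℓ)),
        ∀ u₂ ∈ Set.Ioo (distFunLeft (P.map X) (x ℓ)) (distFun (P.map X) (x ℓ)),
          Wg u₂ - Wg u₁
            = ((∑ ℓ' : Fin (L + 1), ((P.map X) {x ℓ'}).toReal)
                / ((P.map X) {x ℓ}).toReal) * (u₂ - u₁)) := by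
  classical
  have hμprob : IsProbabilityMeasure (P.map X) := Measure.isProbabilityMeasure_map hX.aemeasurable
  obtain ⟨N, hNmeas, hNnull, hNsub⟩ := WT.suppSet_compl_subset_null (P.map X)
  obtain ⟨D, g, hDmeas, hgmeas, hgT, hCD, hPD⟩ := WT.measurable_aux t T hTcont
  -- every support point is a change point or lies in a piece
  have hsupp_cases : ∀ y ∈ suppSet (distFun (P.map X)),
      (∃ k, k ≤ K ∧ (y : EReal) = t k) ∨ ∃ k, 1 ≤ k ∧ k ≤ K ∧ y ∈ pieceO t k := by
    intro y hy
    have h0 : t 0 ≤ (y : EReal) := hsupp0 ▸ sInf_le (Set.mem_image_of_mem _ hy)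
    have hKle : (y : EReal) ≤ t K := hsuppK ▸ le_sSup (Set.mem_image_of_mem _ hy)
    by_cases hc : ∃ k, k ≤ K ∧ (y : EReal) = t k
    · exact Or.inl hc
    · push_neg at hc
      have h0' : t 0 < (y : EReal) := lt_of_le_of_ne h0 (fun h => hc 0 (Nat.zero_le K) h.symm)
      have hK' : (y : EReal) < t K := lt_of_le_of_ne hKle (hc K le_rfl)
      exact Or.inr (WT.exists_piece t h0' hK' (fun k hk => hc k hk.le))
  have hsuppD : suppSet (distFun (P.map X)) ⊆ D := by
    intro y hy
    rcases hsupp_cases y hy with hc | ⟨k, hk1, hkK, hy'⟩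
    · exact hCD hc
    · exact hPD k hk1 hkK hy'
  have hDc_null : (P.map X) Dᶜ = 0 := by
    apply measure_mono_null _ hNnull
    intro z hz
    exact hNsub fun hzs => hz (hsuppD hzs)
  have haeD : ∀ᵐ ω ∂P, X ω ∈ D := by
    rw [ae_iff]
    have h1 : {ω | ¬ X ω ∈ D} = X ⁻¹' Dᶜ := rfl
    rw [h1, ← Measure.map_apply hX hDmeas.compl]
    exact hDc_null
  have haeeq : (fun ω => T (X ω)) =ᵐ[P] fun ω => g (X ω) := by
    filter_upwards [haeD] with ω hω
    exact (hgT _ hω).symm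
  have hae : AEMeasurable (fun ω => T (X ω)) P := ⟨fun ω => g (X ω), hgmeas.comp hX, haeeq⟩
  refine ⟨WT.affine P X hX T hae Wg hWg x₀ hx₀, ?_⟩
  intro L x hx0 hinj hatom hmapTs hexact
  -- the sum identity
  set s := T x₀ with hsdef
  set A : Set ℝ := T ⁻¹' {s} with hAdef
  set R : Set ℝ := Set.range x with hRdef
  have hRsub : R ⊆ A := by
    rintro _ ⟨ℓ, rfl⟩
    exact hmapTs ℓ
  have hRmeas : MeasurableSet R := (Set.finite_range x).measurableSet
  have hμR : (P.map X) R = ∑ ℓ : Fin (L+1), (P.map X) {x ℓ} := by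
    have h1 : R = ⋃ ℓ : Fin (L+1), {x ℓ} := by
      ext z; simp [hRdef, Set.range, eq_comm]
    rw [h1, measure_iUnion (fun i j hij => by
        simp only [Set.disjoint_singleton]
        exact fun h => hij (hinj h)) (fun ℓ => measurableSet_singleton _), tsum_fintype]
  -- countable covering set
  set W : Set ℝ := {y : ℝ | ∃ k, k ≤ K ∧ (y : EReal) = t k}
      ∪ ⋃ k ∈ Set.Icc 1 K, (pieceO t k ∩ A) with hWdef
  have hWc : W.Countable := by
    refine (WT.changePoints_countable t K).union
      (Set.Countable.biUnion (Set.to_countable _) ?_)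
    intro k hk
    apply Set.Subsingleton.countable
    rintro y ⟨hy1, hy2⟩ z ⟨hz1, hz2⟩
    have hTy : T y = T z := by
      have : T y = s := hy2
      have h2 : T z = s := hz2
      rw [this, h2]
    rcases hTmono k hk.1 hk.2 with hm | hm
    · exact hm.injOn hy1 hz1 hTy
    · exact hm.injOn hy1 hz1 hTy
  have hAW : A ∩ suppSet (distFun (P.map X)) ⊆ W := by
    rintro y ⟨hyA, hys⟩
    rcases hsupp_cases y hys with hc | ⟨k, hk1, hkK, hy'⟩
    · exact Or.inl hc
    · exact Or.inr (Set.mem_biUnion (Set.mem_Icc.mpr ⟨hk1, hkK⟩) ⟨hy', hyA⟩)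
  set B : Set ℝ := (A ∩ W) \ R with hBdef
  have hBc : B.Countable := hWc.mono fun z hz => hz.1.2
  have hBnull : (P.map X) B = 0 := by
    have h1 : B = (fun z : ℝ => z) ⁻¹' B := rfl
    rw [h1, measure_preimage_eq_zero_iff_of_countable hBc]
    intro z hz
    by_contra h0
    have hpos : 0 < ((P.map X) {z}).toReal :=
      ENNReal.toReal_pos (by simpa using h0) (measure_ne_top _ _)
    obtain ⟨ℓ, rfl⟩ := hexact z hpos hz.1.1
    exact hz.2 ⟨ℓ, rfl⟩
  set M : Set ℝ := R ∪ B ∪ N with hMdef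
  have hMmeas : MeasurableSet M := (hRmeas.union hBc.measurableSet).union hNmeas
  have hAM : A ⊆ M := by
    intro z hz
    by_cases hzs : z ∈ suppSet (distFun (P.map X))
    · have hzW : z ∈ W := hAW ⟨hz, hzs⟩
      by_cases hzR : z ∈ R
      · exact Or.inl (Or.inl hzR)
      · exact Or.inl (Or.inr ⟨⟨hz, hzW⟩, hzR⟩)
    · exact Or.inr (hNsub hzs)
  have hμM : (P.map X) M = (P.map X) R := by
    apply le_antisymm
    · calc (P.map X) M ≤ (P.map X) (R ∪ B) + (P.map X) N := measure_union_le _ _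
        _ ≤ ((P.map X) R + (P.map X) B) + (P.map X) N :=
            add_le_add_left (measure_union_le _ _) _
        _ = (P.map X) R := by rw [hBnull, hNnull]; simp
    · exact measure_mono (fun z hz => Or.inl (Or.inl hz))
  have hkey : (P.map (fun ω => T (X ω))) {s} = (P.map X) R := by
    rw [Measure.map_apply_of_aemeasurable hae (measurableSet_singleton s)]
    have hpre : (fun ω => T (X ω)) ⁻¹' {s} = X ⁻¹' A := rfl
    rw [hpre]
    apply le_antisymm
    · calc P (X ⁻¹' A) ≤ P (X ⁻¹' M) := measure_mono (Set.preimage_mono hAM)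
        _ = (P.map X) M := (Measure.map_apply hX hMmeas).symm
        _ = (P.map X) R := hμM
    · calc (P.map X) R = P (X ⁻¹' R) := Measure.map_apply hX hRmeas
        _ ≤ P (X ⁻¹' A) := measure_mono (Set.preimage_mono hRsub)
  have hsum : ((P.map (fun ω => T (X ω))) {s}).toReal
      = ∑ ℓ : Fin (L + 1), ((P.map X) {x ℓ}).toReal := by
    rw [hkey, hμR, ENNReal.toReal_sum (fun ℓ _ => measure_ne_top _ _)]
  refine ⟨hsum, ?_⟩
  intro ℓ u₁ hu₁ u₂ hu₂
  have hA1 := WT.affine P X hX T hae Wg hWg (x ℓ) (hatom ℓ) u₁ hu₁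
  have hA2 := WT.affine P X hX T hae Wg hWg (x ℓ) (hatom ℓ) u₂ hu₂
  rw [hA1, hA2]
  have hTxℓ : T (x ℓ) = s := hmapTs ℓ
  rw [hTxℓ]
  have hjump : distFun (P.map (fun ω => T (X ω))) s
      - distFunLeft (P.map (fun ω => T (X ω))) s
      = ∑ ℓ' : Fin (L + 1), ((P.map X) {x ℓ'}).toReal := by
    have : IsProbabilityMeasure (P.map (fun ω => T (X ω))) := Measure.isProbabilityMeasure_map hae
    rw [WT.distFun_eq (P.map (fun ω => T (X ω))) s, ← hsum]; ring
  have hdenom : distFun (P.map X) (x ℓ) - distFunLeft (P.map X) (x ℓ)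
      = ((P.map X) {x ℓ}).toReal := by
    rw [WT.distFun_eq (P.map X) (x ℓ)]; ring
  rw [hjump, hdenom]
  ring
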